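/- arXiv:2112.11326 — 2 statements merged into one kernel-verified Lean document; each statement's English description precedes it below -/
import Mathlib

section
/- (Main theorem) Let μ be a translation-invariant probability measure on Ω = S^(ℤ^d) satisfying GCB(C) for some C > 0, and assume bounded local functions are measure-separating. Then for every translation-invariant probability measure μ' ≠ μ, the lower relative entropy density s_*(μ'|μ) is strictly positive. -/
open MeasureTheory ENNReal Filter Topology

/-- Configuration space Ω = S^(ℤ^d). -/
abbrev Config (S : Type*) (d : ℕ) := (Fin d → ℤ) → S

/-- Single-site oscillation δ_i f, valued in [0,∞]. -/
noncomputable def osc {S : Type*} {d : ℕ} (f : Config S d → ℝ) (i : Fin d → ℤ) : ℝ≥0∞ :=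
  ⨆ (σ : Config S d) (η : Config S d) (_ : ∀ j, j ≠ i → σ j = η j),
    ENNReal.ofReal (f σ - f η)

/-- Translation of a configuration: (τ_i σ)_j = σ_{j-i}. -/
def shift {S : Type*} {d : ℕ} (i : Fin d → ℤ) (σ : Config S d) : Config S d :=
  fun j => σ (j - i)

/-- f is bounded. -/
def IsBoundedFn {S : Type*} {d : ℕ} (f : Config S d → ℝ) : Prop :=
  ∃ M : ℝ, ∀ σ, |f σ| ≤ M

/-- f is local: it depends only on the coordinates in some finite set Λ. -/
def IsLocalFn {S : Type*} {d : ℕ} (f : Config S d → ℝ) : Prop :=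
  ∃ Λ : Finset (Fin d → ℤ), ∀ σ η : Config S d, (∀ i ∈ Λ, σ i = η i) → f σ = f η

/-- The configuration equal to η on Λ and to ξ off Λ. -/
def patch {S : Type*} {d : ℕ} (Λ : Finset (Fin d → ℤ)) (η ξ : Config S d) : Config S d :=
  fun j => if j ∈ Λ then η j else ξ j

/-- Gaussian concentration bound GCB(C) for all bounded local measurable functions. -/
def GCB {S : Type*} {d : ℕ} [MeasurableSpace S] (C : ℝ)
    (μ : Measure (Config S d)) : Prop :=
  ∀ f : Config S d → ℝ, Measurable f → IsBoundedFn f → IsLocalFn f →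
    ∫ x, Real.exp (f x - ∫ y, f y ∂μ) ∂μ ≤
      Real.exp (C / 2 * (∑' i, (osc f i) ^ 2).toReal)

/-- Translation invariance of a measure. -/
def TransInv {S : Type*} {d : ℕ} [MeasurableSpace S] (μ : Measure (Config S d)) : Prop :=
  ∀ i : Fin d → ℤ, μ.map (shift i) = μ

open Classical in
/-- Relative entropy of μ' w.r.t. μ. -/
noncomputable def relEnt {α : Type*} [MeasurableSpace α] (μ' μ : Measure α) : ℝ≥0∞ :=
  if μ' ≪ μ ∧ Integrable (llr μ' μ) μ' then ENNReal.ofReal (∫ x, llr μ' μ x ∂μ') else ⊤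

/-- The cube Λ_n = [-n,n]^d ∩ ℤ^d. -/
noncomputable def cube (d n : ℕ) : Finset (Fin d → ℤ) :=
  Fintype.piFinset fun _ : Fin d => Finset.Icc (-(n : ℤ)) (n : ℤ)

/-- Projection onto the coordinates in Λ. -/
def proj {S : Type*} {d : ℕ} (Λ : Finset (Fin d → ℤ)) (σ : Config S d) : Λ → S :=
  fun i => σ i

/-- Relative entropy of the marginals on Λ. -/
noncomputable def relEntΛ {S : Type*} {d : ℕ} [MeasurableSpace S]
    (Λ : Finset (Fin d → ℤ)) (μ' μ : Measure (Config S d)) : ℝ≥0∞ :=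
  relEnt (μ'.map (proj Λ)) (μ.map (proj Λ))

/-- Lower relative entropy density s_*(μ'|μ). -/
noncomputable def entDensity {S : Type*} {d : ℕ} [MeasurableSpace S]
    (μ' μ : Measure (Config S d)) : ℝ≥0∞ :=
  Filter.atTop.liminf fun n : ℕ => relEntΛ (cube d n) μ' μ / (cube d n).card


section DV
variable {α : Type*} [MeasurableSpace α]

lemma my_integrable_of_bounded {μ : Measure α} [IsFiniteMeasure μ] {f : α → ℝ}
    (hm : Measurable f) {M : ℝ} (hb : ∀ x, |f x| ≤ M) : Integrable f μ := by
  refine ⟨hm.aestronglyMeasurable, ?_⟩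
  exact MeasureTheory.HasFiniteIntegral.of_bounded (C := M) (ae_of_all _ fun x => by
    simpa [Real.norm_eq_abs] using hb x)

lemma my_integral_llr_nonneg {μ ν : Measure α} [IsProbabilityMeasure μ] [IsProbabilityMeasure ν]
    (hμν : μ ≪ ν) (h : Integrable (llr μ ν) μ) : 0 ≤ ∫ x, llr μ ν x ∂μ := by
  have hint : Integrable (fun x => Real.exp (- llr μ ν x)) μ :=
    (Integrable.congr (Measure.integrable_toReal_rnDeriv (μ := ν) (ν := μ))
      (MeasureTheory.exp_neg_llr hμν).symm)
  have hle : ∫ x, Real.exp (- llr μ ν x) ∂μ ≤ 1 := by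
    rw [integral_congr_ae (MeasureTheory.exp_neg_llr hμν)]
    calc ∫ x, (ν.rnDeriv μ x).toReal ∂μ
        ≤ (ν Set.univ).toReal := by
          rw [← setIntegral_univ]
          exact Measure.setIntegral_toReal_rnDeriv_le (measure_ne_top ν _)
      _ = 1 := by simp
  have hptw : ∀ x, - llr μ ν x ≤ Real.exp (- llr μ ν x) - 1 := by
    intro x
    have := Real.add_one_le_exp (- llr μ ν x)
    linarith
  have h1 : ∫ x, - llr μ ν x ∂μ ≤ ∫ x, (Real.exp (- llr μ ν x) - 1) ∂μ :=
    integral_mono h.neg (hint.sub (integrable_const 1)) hptw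
  rw [integral_neg] at h1
  rw [integral_sub hint (integrable_const 1)] at h1
  simp only [integral_const, measure_univ, probReal_univ, ENNReal.toReal_one, smul_eq_mul, one_mul] at h1
  linarith

/-- Donsker–Varadhan inequality. -/
lemma my_dv {ν' ν : Measure α} [IsProbabilityMeasure ν'] [IsProbabilityMeasure ν]
    (hac : ν' ≪ ν) (hint : Integrable (llr ν' ν) ν') {g : α → ℝ}
    (hgm : Measurable g) {M : ℝ} (hb : ∀ x, |g x| ≤ M) :
    ∫ x, g x ∂ν' ≤ ∫ x, llr ν' ν x ∂ν' + Real.log (∫ x, Real.exp (g x) ∂ν) := by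
  have hgint' : Integrable g ν' := my_integrable_of_bounded hgm hb
  have hexp : Integrable (fun x => Real.exp (g x)) ν := by
    refine my_integrable_of_bounded (hgm.exp) (M := Real.exp M) (fun x => ?_)
    rw [abs_of_pos (Real.exp_pos _)]
    exact Real.exp_le_exp.2 ((abs_le.1 (hb x)).2)
  haveI : IsProbabilityMeasure (ν.tilted g) := isProbabilityMeasure_tilted hexp
  have hac2 : ν' ≪ ν.tilted g := hac.trans (absolutelyContinuous_tilted hexp)
  have hint2 : Integrable (llr ν' (ν.tilted g)) ν' :=
    integrable_llr_tilted_right hac hgint' hint hexp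
  have h0 : 0 ≤ ∫ x, llr ν' (ν.tilted g) x ∂ν' := my_integral_llr_nonneg hac2 hint2
  rw [integral_llr_tilted_right hac hgint' hexp hint] at h0
  linarith

end DV

section Osc
variable {S : Type*} {d : ℕ}

lemma le_osc {f : Config S d → ℝ} {i : Fin d → ℤ} {σ η : Config S d}
    (h : ∀ j, j ≠ i → σ j = η j) : ENNReal.ofReal (f σ - f η) ≤ osc f i :=
  le_iSup_of_le σ (le_iSup_of_le η (le_iSup_of_le h le_rfl))

lemma osc_le {f : Config S d → ℝ} {i : Fin d → ℤ} {c : ℝ≥0∞}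
    (h : ∀ σ η : Config S d, (∀ j, j ≠ i → σ j = η j) → ENNReal.ofReal (f σ - f η) ≤ c) :
    osc f i ≤ c :=
  iSup_le fun σ => iSup_le fun η => iSup_le fun hh => h σ η hh

lemma osc_le_of_bounded {f : Config S d → ℝ} {M : ℝ} (hb : ∀ σ, |f σ| ≤ M) (i : Fin d → ℤ) :
    osc f i ≤ ENNReal.ofReal (2 * M) := by
  refine osc_le fun σ η _ => ENNReal.ofReal_le_ofReal ?_
  have h1 := abs_le.1 (hb σ); have h2 := abs_le.1 (hb η); linarith

lemma osc_eq_zero_of_local {f : Config S d → ℝ} {Λ : Finset (Fin d → ℤ)}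
    (hloc : ∀ σ η : Config S d, (∀ i ∈ Λ, σ i = η i) → f σ = f η)
    {i : Fin d → ℤ} (hi : i ∉ Λ) : osc f i = 0 := by
  refine le_antisymm (osc_le fun σ η h => ?_) zero_le
  have : f σ = f η := hloc σ η fun j hj => h j (fun hji => hi (hji ▸ hj))
  simp [this]

lemma osc_add_le {f g : Config S d → ℝ} (i : Fin d → ℤ) :
    osc (fun σ => f σ + g σ) i ≤ osc f i + osc g i := by
  refine osc_le fun σ η h => ?_
  have he : f σ + g σ - (f η + g η) = (f σ - f η) + (g σ - g η) := by ring
  rw [he]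
  exact le_trans ENNReal.ofReal_add_le (add_le_add (le_osc h) (le_osc h))

lemma osc_sum_le {ι : Type*} (T : Finset ι) (F : ι → Config S d → ℝ) (i : Fin d → ℤ) :
    osc (fun σ => ∑ k ∈ T, F k σ) i ≤ ∑ k ∈ T, osc (F k) i := by
  classical
  induction T using Finset.induction_on with
  | empty => exact osc_le (fun σ η _ => by simp)
  | @insert a T ha ih =>
    simp only [Finset.sum_insert ha]
    exact le_trans (osc_add_le i) (add_le_add_right ih _)

lemma osc_comp_shift_le (f : Config S d → ℝ) (k i : Fin d → ℤ) :
    osc (fun σ => f (shift k σ)) i ≤ osc f (i + k) := by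
  refine osc_le fun σ η h => le_osc fun j hj => ?_
  show σ (j - k) = η (j - k)
  refine h _ fun hc => hj ?_
  rw [← hc]; ring

lemma osc_smul_le {f : Config S d → ℝ} {lam : ℝ} (hl : 0 ≤ lam) (i : Fin d → ℤ) :
    osc (fun σ => lam * f σ) i ≤ ENNReal.ofReal lam * osc f i := by
  refine osc_le fun σ η h => ?_
  rw [← mul_sub, ENNReal.ofReal_mul hl]
  exact mul_le_mul_right (le_osc h) _

lemma osc_step {f : Config S d → ℝ} {i : Fin d → ℤ} (h0 : osc f i = 0)
    {σ η : Config S d} (h : ∀ j, j ≠ i → σ j = η j) : f σ = f η := by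
  have h1 : ENNReal.ofReal (f σ - f η) = 0 := le_antisymm (h0 ▸ le_osc h) zero_le
  have h2 : ENNReal.ofReal (f η - f σ) = 0 :=
    le_antisymm (h0 ▸ le_osc (fun j hj => (h j hj).symm)) zero_le
  rw [ENNReal.ofReal_eq_zero] at h1 h2
  linarith

lemma constant_of_osc_zero {f : Config S d → ℝ} {Λ : Finset (Fin d → ℤ)}
    (hloc : ∀ σ η : Config S d, (∀ i ∈ Λ, σ i = η i) → f σ = f η)
    (h0 : ∀ i, osc f i = 0) (σ η : Config S d) : f σ = f η := by
  classical
  have key : ∀ T : Finset (Fin d → ℤ), f (patch T σ η) = f η := by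
    intro T
    induction T using Finset.induction_on with
    | empty =>
      have : patch (∅ : Finset (Fin d → ℤ)) σ η = η := by funext j; simp [patch]
      rw [this]
    | @insert a T ha ih =>
      rw [← ih]
      refine osc_step (h0 a) fun j hj => ?_
      simp only [patch, Finset.mem_insert]
      rcases Decidable.em (j ∈ T) with hT | hT
      · simp [hT, hj]
      · simp [hT, hj]
  have h1 : f σ = f (patch Λ σ η) := hloc _ _ fun i hi => by simp [patch, hi]
  rw [h1, key]

end Osc

section Cube

lemma mem_cube {d n : ℕ} {i : Fin d → ℤ} :
    i ∈ cube d n ↔ ∀ a, -(n:ℤ) ≤ i a ∧ i a ≤ n := by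
  simp [cube, Fintype.mem_piFinset, Finset.mem_Icc]

lemma sub_mem_cube {d r n : ℕ} {j k : Fin d → ℤ} (hj : j ∈ cube d r) (hk : k ∈ cube d n) :
    j - k ∈ cube d (n + r) := by
  rw [mem_cube] at hj hk ⊢
  intro a
  have h1 := hj a; have h2 := hk a
  simp only [Pi.sub_apply]
  push_cast
  omega

lemma card_cube (d n : ℕ) : (cube d n).card = (2*n+1)^d := by
  rw [cube, Fintype.card_piFinset]
  have : ((Finset.Icc (-(n:ℤ)) (n:ℤ))).card = 2*n+1 := by
    rw [Int.card_Icc]; omega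
  simp [this]

end Cube

section Meas
variable {S : Type*} {d : ℕ} [MeasurableSpace S]

lemma measurable_shift (k : Fin d → ℤ) : Measurable (shift (S := S) k) :=
  measurable_pi_lambda _ fun j => measurable_pi_apply (j - k)

lemma measurable_proj (Λ : Finset (Fin d → ℤ)) : Measurable (proj (S := S) Λ) :=
  measurable_pi_lambda _ fun i => measurable_pi_apply _

lemma integral_comp_shift (ν : Measure (Config S d)) (hν : TransInv ν)
    {f : Config S d → ℝ} (hm : Measurable f) (k : Fin d → ℤ) :
    ∫ σ, f (shift k σ) ∂ν = ∫ σ, f σ ∂ν := by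
  conv_rhs => rw [← hν k]
  rw [integral_map (measurable_shift k).aemeasurable hm.aestronglyMeasurable]

end Meas

theorem gcb_implies_entDensity_pos {S : Type*} {d : ℕ}
    [MeasurableSpace S] [MetricSpace S] [BorelSpace S]
    (hdiam : Bornology.IsBounded (Set.univ : Set S))
    (hsep : ∀ ν ν' : Measure (Config S d), IsProbabilityMeasure ν → IsProbabilityMeasure ν' →
      (∀ f : Config S d → ℝ, Measurable f → IsBoundedFn f → IsLocalFn f →
        ∫ x, f x ∂ν = ∫ x, f x ∂ν') → ν = ν')
    (μ μ' : Measure (Config S d)) [IsProbabilityMeasure μ] [IsProbabilityMeasure μ']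
    (C : ℝ) (hC : 0 < C) (hGCB : GCB C μ)
    (hμ : TransInv μ) (hμ' : TransInv μ')
    (hne : μ' ≠ μ) :
    0 < entDensity μ' μ := by
  classical
  -- the configuration space is nonempty
  have hne0 : Nonempty (Config S d) := by
    by_contra h
    rw [not_nonempty_iff] at h
    have h1 : μ Set.univ = 1 := measure_univ
    rw [Set.univ_eq_empty_iff.2 h] at h1
    simp at h1
  obtain ⟨σ₀⟩ := hne0
  -- a bounded local measurable function with different integrals
  have hex : ∃ f : Config S d → ℝ, Measurable f ∧ IsBoundedFn f ∧ IsLocalFn f ∧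
      ∫ x, f x ∂μ' ≠ ∫ x, f x ∂μ := by
    by_contra h
    push_neg at h
    exact hne (hsep μ' μ inferInstance inferInstance fun f hm hb hl => h f hm hb hl)
  obtain ⟨f₀, hm₀, hb₀, hl₀, hΔ₀⟩ := hex
  -- WLOG the difference is positive
  obtain ⟨f, hm, ⟨M, hb⟩, ⟨Λ₀, hl⟩, hΔpos⟩ :
      ∃ f : Config S d → ℝ, Measurable f ∧ IsBoundedFn f ∧ IsLocalFn f ∧
        0 < ∫ x, f x ∂μ' - ∫ x, f x ∂μ := by
    rcases lt_or_gt_of_ne (sub_ne_zero.2 hΔ₀) with hlt | hgt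
    · obtain ⟨M, hM⟩ := hb₀
      obtain ⟨Λ₀, hΛ⟩ := hl₀
      refine ⟨fun σ => - f₀ σ, hm₀.neg, ⟨M, fun σ => by simpa using hM σ⟩,
        ⟨Λ₀, fun σ η hh => by show -f₀ σ = -f₀ η; rw [hΛ σ η hh]⟩, ?_⟩
      rw [integral_neg, integral_neg]
      linarith
    · exact ⟨f₀, hm₀, hb₀, hl₀, hgt⟩
  set Δ := ∫ x, f x ∂μ' - ∫ x, f x ∂μ with hΔdef
  -- a cube containing the support of f
  obtain ⟨r, hΛr⟩ : ∃ r : ℕ, ∀ i ∈ Λ₀, i ∈ cube d r := by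
    refine ⟨Λ₀.sup fun i => Finset.univ.sup fun b => (i b).natAbs, fun i hi => ?_⟩
    rw [mem_cube]
    intro a
    have h1 : (i a).natAbs ≤ Λ₀.sup fun i => Finset.univ.sup fun b => (i b).natAbs :=
      le_trans (Finset.le_sup (f := fun b => (i b).natAbs) (Finset.mem_univ a))
        (Finset.le_sup (f := fun i => Finset.univ.sup fun b => (i b).natAbs) hi)
    have h2 : |i a| ≤ ((Λ₀.sup fun i => Finset.univ.sup fun b => (i b).natAbs : ℕ) : ℤ) := by
      rw [Int.abs_eq_natAbs]; exact_mod_cast h1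
    exact abs_le.1 h2
  have hlr : ∀ σ η : Config S d, (∀ i ∈ cube d r, σ i = η i) → f σ = f η :=
    fun σ η h => hl σ η fun i hi => h i (hΛr i hi)
  have hM0 : 0 ≤ M := le_trans (abs_nonneg _) (hb σ₀)
  -- the total oscillation of f
  set A : ℝ≥0∞ := ∑' j, osc f j with hAdef
  have hAsum : A = ∑ j ∈ cube d r, osc f j :=
    tsum_eq_sum fun j hj => osc_eq_zero_of_local hlr hj
  have hAtop : A ≠ ⊤ := by
    rw [hAsum]
    exact ENNReal.sum_ne_top.2 fun j _ =>
      (lt_of_le_of_lt (osc_le_of_bounded hb j) ENNReal.ofReal_lt_top).ne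
  have hApos : 0 < A := by
    rcases eq_zero_or_pos A with h0 | h
    · exfalso
      have hosc0 : ∀ i, osc f i = 0 := fun i => ENNReal.tsum_eq_zero.1 h0 i
      have hconst : ∀ σ η : Config S d, f σ = f η :=
        constant_of_osc_zero hl hosc0
      have h1 : ∫ x, f x ∂μ' = f σ₀ := by
        have : (fun x => f x) = fun _ => f σ₀ := funext fun x => hconst x σ₀
        rw [this, integral_const]; simp
      have h2 : ∫ x, f x ∂μ = f σ₀ := by
        have : (fun x => f x) = fun _ => f σ₀ := funext fun x => hconst x σ₀
        rw [this, integral_const]; simp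
      rw [hΔdef, h1, h2] at hΔpos
      linarith
    · exact h
  set a : ℝ := A.toReal with hadef
  have hapos : 0 < a := ENNReal.toReal_pos hApos.ne' hAtop
  -- the key lower bound at scale n + r
  set c' : ℝ := Δ^2 / (2*C*a^2*((2*r+1)^d : ℕ)^2) with hc'def
  have hc'pos : 0 < c' := by
    apply div_pos (by positivity)
    have : (0:ℝ) < ((2*r+1)^d : ℕ) := by positivity
    positivity
  have key : ∀ n : ℕ, ENNReal.ofReal c'
      ≤ relEntΛ (cube d (n+r)) μ' μ / (cube d (n+r)).card := by
    intro n
    set Λm := cube d (n + r) with hΛm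
    set Nn : ℕ := (cube d n).card with hNn
    set Nm : ℕ := Λm.card with hNm
    have hNnval : Nn = (2*n+1)^d := card_cube d n
    have hNmval : Nm = (2*(n+r)+1)^d := card_cube d (n+r)
    have hNnpos : 0 < (Nn:ℝ) := by rw [hNnval]; positivity
    have hNmpos : 0 < (Nm:ℝ) := by rw [hNmval]; positivity
    set F : Config S d → ℝ := fun σ => ∑ k ∈ cube d n, f (shift k σ) with hF
    have hFm : Measurable F := Finset.measurable_sum _ fun k _ => hm.comp (measurable_shift k)
    have hFb : ∀ σ, |F σ| ≤ Nn * M := by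
      intro σ
      calc |F σ| ≤ ∑ k ∈ cube d n, |f (shift k σ)| := Finset.abs_sum_le_sum_abs _ _
        _ ≤ ∑ k ∈ cube d n, M := Finset.sum_le_sum fun k _ => hb _
        _ = Nn * M := by rw [Finset.sum_const, nsmul_eq_mul]
    have hFloc : ∀ σ η : Config S d, (∀ i ∈ Λm, σ i = η i) → F σ = F η := by
      intro σ η hagree
      refine Finset.sum_congr rfl fun k hk => hlr _ _ fun j hj => ?_
      exact hagree _ (sub_mem_cube hj hk)
    have hFloc' : ∀ σ η : Config S d, (∀ i ∈ Λm, σ i = η i) → F σ = F η := hFloc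
    have hoscF_le : ∀ i, osc F i ≤ A := by
      intro i
      calc osc F i ≤ ∑ k ∈ cube d n, osc (fun σ => f (shift k σ)) i := osc_sum_le _ _ i
        _ ≤ ∑ k ∈ cube d n, osc f (i + k) := Finset.sum_le_sum fun k _ => osc_comp_shift_le f k i
        _ = ∑ j ∈ (cube d n).image (fun k => i + k), osc f j := by
            rw [Finset.sum_image (fun x _ y _ h => by simpa using h)]
        _ ≤ A := hAdef ▸ ENNReal.sum_le_tsum _
    set B : ℝ≥0∞ := ∑' i, (osc F i)^2 with hB
    have hBsum : B = ∑ i ∈ Λm, (osc F i)^2 :=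
      tsum_eq_sum fun i hi => by rw [osc_eq_zero_of_local hFloc hi]; simp
    have hBle : B ≤ (Nm : ℝ≥0∞) * A^2 := by
      rw [hBsum]
      calc ∑ i ∈ Λm, (osc F i)^2 ≤ ∑ i ∈ Λm, A^2 :=
            Finset.sum_le_sum fun i _ => pow_le_pow_left' (hoscF_le i) 2
        _ = (Nm : ℝ≥0∞) * A^2 := by rw [Finset.sum_const, nsmul_eq_mul]
    have hNmA_top : (Nm : ℝ≥0∞) * A^2 ≠ ⊤ :=
      ENNReal.mul_ne_top (ENNReal.natCast_ne_top _) (ENNReal.pow_ne_top hAtop)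
    have hBtop : B ≠ ⊤ := ne_top_of_le_ne_top hNmA_top hBle
    have hBreal : B.toReal ≤ Nm * a^2 := by
      have := ENNReal.toReal_mono hNmA_top hBle
      rw [ENNReal.toReal_mul, ENNReal.toReal_pow] at this
      simpa using this
    -- integrals of F
    have hintF : ∀ (ν : Measure (Config S d)), IsProbabilityMeasure ν → TransInv ν →
        ∫ σ, F σ ∂ν = Nn * ∫ σ, f σ ∂ν := by
      intro ν hprob hν
      simp only [hF]
      have hintk : ∀ k ∈ cube d n, Integrable (fun σ => f (shift k σ)) ν :=
        fun k _ => my_integrable_of_bounded (hm.comp (measurable_shift k)) (fun σ => hb _)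
      rw [integral_finset_sum _ hintk]
      rw [Finset.sum_congr rfl (fun k _ => integral_comp_shift ν hν hm k),
        Finset.sum_const, nsmul_eq_mul]
    have hFμ : ∫ σ, F σ ∂μ = Nn * ∫ σ, f σ ∂μ := hintF μ inferInstance hμ
    have hFμ' : ∫ σ, F σ ∂μ' = Nn * ∫ σ, f σ ∂μ' := hintF μ' inferInstance hμ'
    -- the optimal tilt parameter
    set lam : ℝ := (Nn * Δ) / (C * Nm * a^2) with hlam
    have hlampos : 0 < lam :=
      div_pos (mul_pos hNnpos hΔpos) (mul_pos (mul_pos hC hNmpos) (pow_pos hapos 2))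
    set g : Config S d → ℝ := fun σ => lam * F σ with hg
    have hgm : Measurable g := hFm.const_mul lam
    have hgb : ∀ σ, |g σ| ≤ lam * (Nn * M) := fun σ => by
      rw [hg]; simp only
      rw [abs_mul, abs_of_pos hlampos]
      exact mul_le_mul_of_nonneg_left (hFb σ) hlampos.le
    have hgloc : ∀ σ η : Config S d, (∀ i ∈ Λm, σ i = η i) → g σ = g η := by
      intro σ η h
      rw [hg]; simp only
      rw [hFloc σ η h]
    -- GCB gives a bound on the log-moment generating function
    have hgcb := hGCB g hgm ⟨lam * (Nn*M), hgb⟩ ⟨Λm, hgloc⟩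
    have hoscg : (∑' i, (osc g i)^2) ≤ (ENNReal.ofReal lam)^2 * B := by
      rw [hB, ← ENNReal.tsum_mul_left]
      refine ENNReal.tsum_le_tsum fun i => ?_
      calc (osc g i)^2 ≤ (ENNReal.ofReal lam * osc F i)^2 :=
            pow_le_pow_left' (osc_smul_le hlampos.le i) 2
        _ = (ENNReal.ofReal lam)^2 * (osc F i)^2 := by rw [mul_pow]
    have hoscg_top : (ENNReal.ofReal lam)^2 * B ≠ ⊤ :=
      ENNReal.mul_ne_top (ENNReal.pow_ne_top ENNReal.ofReal_ne_top) hBtop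
    have hoscg_real : (∑' i, (osc g i)^2).toReal ≤ lam^2 * B.toReal := by
      have := ENNReal.toReal_mono hoscg_top hoscg
      rwa [ENNReal.toReal_mul, ENNReal.toReal_pow, ENNReal.toReal_ofReal hlampos.le] at this
    set E : ℝ := C/2 * (lam^2 * (Nm * a^2)) with hE
    have hEbound : C/2 * (∑' i, (osc g i)^2).toReal ≤ E := by
      rw [hE]
      refine mul_le_mul_of_nonneg_left ?_ (by linarith)
      exact le_trans hoscg_real (mul_le_mul_of_nonneg_left hBreal (pow_pos hlampos 2).le)
    have hgexp_int : Integrable (fun x => Real.exp (g x)) μ := by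
      refine my_integrable_of_bounded hgm.exp (M := Real.exp (lam * (Nn*M))) fun x => ?_
      rw [abs_of_pos (Real.exp_pos _)]
      exact Real.exp_le_exp.2 (abs_le.1 (hgb x)).2
    have hgexp_pos : 0 < ∫ x, Real.exp (g x) ∂μ := integral_exp_pos hgexp_int
    have hlog : Real.log (∫ x, Real.exp (g x) ∂μ) ≤ ∫ x, g x ∂μ + E := by
      have h1 : ∫ x, Real.exp (g x - ∫ y, g y ∂μ) ∂μ ≤ Real.exp E :=
        le_trans hgcb (Real.exp_le_exp.2 hEbound)
      have h2 : ∫ x, Real.exp (g x - ∫ y, g y ∂μ) ∂μ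
          = (∫ x, Real.exp (g x) ∂μ) / Real.exp (∫ y, g y ∂μ) := by
        simp_rw [Real.exp_sub]
        rw [integral_div]
      rw [h2, div_le_iff₀ (Real.exp_pos _), ← Real.exp_add] at h1
      rw [Real.log_le_iff_le_exp hgexp_pos]
      convert h1 using 2
      · rfl
      ring
    -- Donsker-Varadhan on the marginal
    by_cases hcase : μ'.map (proj Λm) ≪ μ.map (proj Λm)
        ∧ Integrable (llr (μ'.map (proj Λm)) (μ.map (proj Λm))) (μ'.map (proj Λm))
    · haveI : IsProbabilityMeasure (μ.map (proj Λm)) :=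
        Measure.isProbabilityMeasure_map (measurable_proj Λm).aemeasurable
      haveI : IsProbabilityMeasure (μ'.map (proj Λm)) :=
        Measure.isProbabilityMeasure_map (measurable_proj Λm).aemeasurable
      set e : (Λm → S) → Config S d := fun y j => if h : j ∈ Λm then y ⟨j, h⟩ else σ₀ j with he
      have hem : Measurable e := by
        refine measurable_pi_lambda _ fun j => ?_
        by_cases hj : j ∈ Λm
        · simp only [he, dif_pos hj]
          exact measurable_pi_apply _
        · simp only [he, dif_neg hj]
          exact measurable_const
      set G : (Λm → S) → ℝ := fun y => g (e y) with hG
      have hGm : Measurable G := hgm.comp hem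
      have hGb : ∀ y, |G y| ≤ lam * (Nn * M) := fun y => hgb _
      have hGproj : ∀ σ, G (proj Λm σ) = g σ := by
        intro σ
        rw [hG]; simp only
        refine hgloc _ _ fun j hj => ?_
        show (if h : j ∈ Λm then proj Λm σ ⟨j, h⟩ else σ₀ j) = σ j
        rw [dif_pos hj]; rfl
      have hInt1 : ∫ y, G y ∂(μ'.map (proj Λm)) = ∫ x, g x ∂μ' := by
        rw [integral_map (measurable_proj Λm).aemeasurable hGm.aestronglyMeasurable]
        exact integral_congr_ae (ae_of_all _ fun σ => hGproj σ)
      have hInt2 : ∫ y, Real.exp (G y) ∂(μ.map (proj Λm)) = ∫ x, Real.exp (g x) ∂μ := by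
        rw [integral_map (measurable_proj Λm).aemeasurable hGm.exp.aestronglyMeasurable]
        refine integral_congr_ae (ae_of_all _ fun σ => ?_)
        show Real.exp (G (proj Λm σ)) = Real.exp (g σ)
        rw [hGproj σ]
      set I : ℝ := ∫ x, llr (μ'.map (proj Λm)) (μ.map (proj Λm)) x ∂(μ'.map (proj Λm)) with hI
      have hdv := my_dv hcase.1 hcase.2 hGm hGb
      rw [hInt1, hInt2, ← hI] at hdv
      clear_value Δ a lam E I
      have hgint1 : ∫ x, g x ∂μ' = lam * ∫ x, F x ∂μ' := integral_const_mul lam F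
      have hgint2 : ∫ x, g x ∂μ = lam * ∫ x, F x ∂μ := integral_const_mul lam F
      have hmain : lam * (Nn * Δ) ≤ I + E := by
        have h5 := le_trans hdv (add_le_add_right hlog I)
        rw [hgint1, hgint2, hFμ, hFμ'] at h5
        have hring : lam * (Nn * ∫ x, f x ∂μ') - lam * (Nn * ∫ x, f x ∂μ)
            = lam * (Nn * Δ) := by rw [hΔdef]; ring
        linarith [h5, hring]
      have hXle : (Nn*Δ)^2/(2*C*Nm*a^2) ≤ I := by
        have hDpos : (0:ℝ) < C*Nm*a^2 := mul_pos (mul_pos hC hNmpos) (pow_pos hapos 2)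
        have hD2pos : (0:ℝ) < 2*C*Nm*a^2 := by linarith
        have hlameq : lam * (C*(Nm:ℝ)*a^2) = Nn*Δ := by
          rw [hlam]; exact div_mul_cancel₀ _ hDpos.ne'
        have hX : ((Nn:ℝ)*Δ)^2/(2*C*Nm*a^2) = lam^2*(C*Nm*a^2)/2 := by
          rw [← hlameq, div_eq_div_iff hD2pos.ne' (two_ne_zero)]
          ring
        have hE' : E = lam^2*(C*(Nm:ℝ)*a^2)/2 := by rw [hE]; ring
        have hlamNn : lam*((Nn:ℝ)*Δ) = lam^2*(C*Nm*a^2) := by rw [← hlameq]; ring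
        rw [hX]
        linarith [hmain, hE', hlamNn]
      have hrel : relEntΛ Λm μ' μ = ENNReal.ofReal I := by
        rw [relEntΛ, relEnt, if_pos hcase, hI]
      rw [hrel]
      have hNmn0 : 0 < Nm := by rw [hNmval]; positivity
      have hNm0 : ((Nm:ℕ) : ℝ≥0∞) ≠ 0 := Nat.cast_ne_zero.2 hNmn0.ne'
      rw [ENNReal.le_div_iff_mul_le (Or.inl hNm0) (Or.inl (ENNReal.natCast_ne_top Nm))]
      rw [← ENNReal.ofReal_natCast Nm, ← ENNReal.ofReal_mul hc'pos.le]
      refine ENNReal.ofReal_le_ofReal (le_trans ?_ hXle)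
      -- c' * Nm ≤ (Nn*Δ)^2/(2*C*Nm*a^2)
      have hNK : (Nm:ℝ) ≤ (Nn:ℝ) * ((2*r+1)^d : ℕ) := by
        have hnat : (2*(n+r)+1)^d ≤ (2*n+1)^d * (2*r+1)^d := by
          rw [← Nat.mul_pow]
          refine Nat.pow_le_pow_left ?_ d
          have hq : (2*n+1)*(2*r+1) = 4*(n*r)+(2*(n+r)+1) := by ring
          rw [hq]
          exact Nat.le_add_left _ _
        rw [hNmval, hNnval]
        exact_mod_cast hnat
      have hKpos : (0:ℝ) < ((2*r+1)^d : ℕ) := by positivity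
      have h2C : (0:ℝ) < 2*C := by linarith
      have hd1 : (0:ℝ) < 2*C*a^2*((2*r+1)^d : ℕ)^2 :=
        mul_pos (mul_pos h2C (pow_pos hapos 2)) (pow_pos hKpos 2)
      have hd2 : (0:ℝ) < 2*C*Nm*a^2 := mul_pos (mul_pos h2C hNmpos) (pow_pos hapos 2)
      rw [hc'def, div_mul_eq_mul_div, div_le_div_iff₀ hd1 hd2]
      have hNm2 : ((Nm:ℝ))^2 ≤ ((Nn:ℝ) * ((2*r+1)^d : ℕ))^2 :=
        pow_le_pow_left₀ hNmpos.le hNK 2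
      have hnn : (0:ℝ) ≤ 2*C*Δ^2*a^2 :=
        mul_nonneg (mul_nonneg (mul_nonneg (by norm_num) hC.le) (sq_nonneg Δ)) (sq_nonneg a)
      calc Δ^2 * (Nm:ℝ) * (2*C*Nm*a^2) = (2*C*Δ^2*a^2) * (Nm:ℝ)^2 := by ring
        _ ≤ (2*C*Δ^2*a^2) * ((Nn:ℝ) * ((2*r+1)^d : ℕ))^2 :=
            mul_le_mul_of_nonneg_left hNm2 hnn
        _ = ((Nn:ℝ)*Δ)^2 * (2*C*a^2*((2*r+1)^d : ℕ)^2) := by ring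
    · have htop : relEntΛ Λm μ' μ = ⊤ := by rw [relEntΛ, relEnt, if_neg hcase]
      rw [htop]
      rw [ENNReal.top_div_of_lt_top (by exact ENNReal.natCast_lt_top Nm)]
      exact le_top

  -- conclude via the liminf
  have hev : ∀ᶠ m in atTop, ENNReal.ofReal c'
      ≤ relEntΛ (cube d m) μ' μ / (cube d m).card := by
    rw [eventually_atTop]
    refine ⟨r, fun m hmr => ?_⟩
    have : m = (m - r) + r := (Nat.sub_add_cancel hmr).symm
    rw [this]
    exact key (m - r)
  have hle : ENNReal.ofReal c' ≤ entDensity μ' μ := le_liminf_of_le (by isBoundedDefault) hev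
  exact lt_of_lt_of_le (ENNReal.ofReal_pos.2 hc'pos) hle
end

section
/- Let μ satisfy GCB(C) and be translation invariant, μ' translation invariant. Let f be a bounded local function with dependence set in the cube Λ_r, ∫ f dμ' - ∫ f dμ > u > 0, and ‖δf‖_1² = ρ ∈ (0,∞). Then for all n, s_{Λ_{n+r}}(μ'|μ)/|Λ_n| ≥ sup_{β ≥ 0} (βu - (C/2)β²ρ) = u²/(2Cρ) > 0. -/
open MeasureTheory ENNReal Filter Topology

section Aux
open Real

namespace GCBProof

lemma gibbs_nonneg {α : Type*} [MeasurableSpace α] (μ ν : Measure α)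
    [IsProbabilityMeasure μ] [IsProbabilityMeasure ν] (h : μ ≪ ν)
    (hint : Integrable (llr μ ν) μ) : 0 ≤ ∫ x, llr μ ν x ∂μ := by
  set w := μ.rnDeriv ν with hw
  have hwm : Measurable w := Measure.measurable_rnDeriv μ ν
  have hpos : ∀ᵐ x ∂μ, 0 < w x := Measure.rnDeriv_pos h
  have hlt : ∀ᵐ x ∂μ, w x < ⊤ := h.ae_le (Measure.rnDeriv_lt_top μ ν)
  have hli : ∫⁻ x, (w x)⁻¹ ∂μ ≤ 1 := by
    conv_lhs => rw [← Measure.withDensity_rnDeriv_eq μ ν h]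
    rw [lintegral_withDensity_eq_lintegral_mul _ hwm (by fun_prop)]
    calc ∫⁻ x, (w * fun x => (w x)⁻¹) x ∂ν ≤ ∫⁻ _, 1 ∂ν := by
          refine lintegral_mono fun x => ?_
          simp only [Pi.mul_apply]
          exact ENNReal.mul_inv_le_one (w x)
      _ = 1 := by simp
  have hinv_int : Integrable (fun x => ((w x)⁻¹).toReal) μ :=
    integrable_toReal_of_lintegral_ne_top (by fun_prop) (lt_of_le_of_lt hli ENNReal.one_lt_top).ne
  have hinv_val : ∫ x, ((w x)⁻¹).toReal ∂μ ≤ 1 := by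
    rw [integral_toReal (by fun_prop) ?_]
    · exact ENNReal.toReal_le_of_le_ofReal one_pos.le (by simpa using hli)
    · filter_upwards [hpos] with x hx
      simp [ENNReal.inv_lt_top, hx]
  have key : ∀ᵐ x ∂μ, 1 - ((w x)⁻¹).toReal ≤ llr μ ν x := by
    filter_upwards [hpos, hlt] with x hx hx'
    have htr : 0 < (w x).toReal := ENNReal.toReal_pos hx.ne' hx'.ne
    have := Real.log_le_sub_one_of_pos (inv_pos.mpr htr)
    rw [Real.log_inv] at this
    rw [llr_def, ENNReal.toReal_inv]
    linarith
  have := integral_mono_ae ((integrable_const (1:ℝ)).sub hinv_int) hint key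
  simp only [Pi.sub_apply] at this
  rw [integral_sub (integrable_const _) hinv_int] at this
  simp only [integral_const, measure_univ, ENNReal.toReal_one, probReal_univ, smul_eq_mul, one_mul] at this
  linarith

lemma dv_bound {α : Type*} [MeasurableSpace α] (μ ν : Measure α)
    [IsProbabilityMeasure μ] [IsProbabilityMeasure ν] (h : μ ≪ ν)
    (hint : Integrable (llr μ ν) μ) (g : α → ℝ) (hg : Integrable g μ)
    (hge : Integrable (fun x => rexp (g x)) ν) :
    ∫ x, g x ∂μ - Real.log (∫ x, rexp (g x) ∂ν) ≤ ∫ x, llr μ ν x ∂μ := by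
  have htp : IsProbabilityMeasure (ν.tilted g) := isProbabilityMeasure_tilted hge
  have hac : μ ≪ ν.tilted g := h.trans (absolutelyContinuous_tilted hge)
  have hint' : Integrable (llr μ (ν.tilted g)) μ :=
    integrable_llr_tilted_right h hg hint hge
  have h0 : 0 ≤ ∫ x, llr μ (ν.tilted g) x ∂μ := gibbs_nonneg μ _ hac hint'
  rw [integral_llr_tilted_right h hg hge hint] at h0
  linarith

variable {S : Type*} {d : ℕ} [MeasurableSpace S]

lemma mem_cube {n : ℕ} {i : Fin d → ℤ} : i ∈ cube d n ↔ ∀ j, -(n:ℤ) ≤ i j ∧ i j ≤ n := by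
  simp [cube, Fintype.mem_piFinset, Finset.mem_Icc, forall_and]

lemma zero_mem_cube (n : ℕ) : (0 : Fin d → ℤ) ∈ cube d n := by
  simp [mem_cube]

omit [MeasurableSpace S] in
lemma measurable_shift' [MeasurableSpace S] (i : Fin d → ℤ) : Measurable (shift (S := S) i) :=
  measurable_pi_lambda _ fun j => measurable_pi_apply (j - i)

lemma measurable_proj' (Λ : Finset (Fin d → ℤ)) : Measurable (proj (S := S) Λ) :=
  measurable_pi_lambda _ fun i => measurable_pi_apply _

noncomputable def ext' (Λ : Finset (Fin d → ℤ)) (ξ : Config S d) (x : Λ → S) : Config S d :=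
  fun j => if h : j ∈ Λ then x ⟨j, h⟩ else ξ j

lemma measurable_ext' (Λ : Finset (Fin d → ℤ)) (ξ : Config S d) :
    Measurable (ext' (S := S) Λ ξ) := by
  refine measurable_pi_lambda _ fun j => ?_
  unfold ext'
  split
  · exact measurable_pi_apply _
  · exact measurable_const

lemma integral_shift {μ : Measure (Config S d)} (hμ : TransInv μ)
    (g : Config S d → ℝ) (hg : Measurable g) (i : Fin d → ℤ) :
    ∫ σ, g (shift i σ) ∂μ = ∫ σ, g σ ∂μ := by
  conv_rhs => rw [← hμ i]
  rw [integral_map (measurable_shift' i).aemeasurable hg.aestronglyMeasurable]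

omit [MeasurableSpace S] in
lemma osc_comp_shift (f : Config S d → ℝ) (k i : Fin d → ℤ) :
    osc (fun σ => f (shift k σ)) i ≤ osc f (i + k) := by
  refine iSup_le fun σ => iSup_le fun η => iSup_le fun hagree => ?_
  refine le_iSup_of_le (shift k σ) (le_iSup_of_le (shift k η) (le_iSup_of_le ?_ le_rfl))
  intro j hj
  simp only [shift]
  exact hagree _ (by intro hc; apply hj; rw [← hc]; abel)

lemma ofReal_sum_le' {ι : Type*} [DecidableEq ι] (s : Finset ι) (g : ι → ℝ) :
    ENNReal.ofReal (∑ k ∈ s, g k) ≤ ∑ k ∈ s, ENNReal.ofReal (g k) := by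
  induction s using Finset.induction with
  | empty => simp
  | insert a s h ih =>
    rw [Finset.sum_insert h, Finset.sum_insert h]
    exact le_trans (ENNReal.ofReal_add_le) (add_le_add le_rfl ih)

omit [MeasurableSpace S] in
lemma osc_smul_sum (f : Config S d → ℝ) (Λ : Finset (Fin d → ℤ)) (β : ℝ) (hβ : 0 ≤ β)
    (i : Fin d → ℤ) :
    osc (fun σ => β * ∑ k ∈ Λ, f (shift k σ)) i ≤
      ENNReal.ofReal β * ∑ k ∈ Λ, osc f (i + k) := by
  refine iSup_le fun σ => iSup_le fun η => iSup_le fun hagree => ?_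
  have : β * (∑ k ∈ Λ, f (shift k σ)) - β * (∑ k ∈ Λ, f (shift k η))
      = β * ∑ k ∈ Λ, (f (shift k σ) - f (shift k η)) := by
    rw [Finset.sum_sub_distrib]; ring
  simp only [this, ENNReal.ofReal_mul hβ]
  refine mul_le_mul_right (le_trans (ofReal_sum_le' _ _) (Finset.sum_le_sum fun k _ => ?_)) _
  refine le_trans ?_ (osc_comp_shift f k i)
  exact le_iSup_of_le σ (le_iSup_of_le η (le_iSup_of_le hagree le_rfl))

lemma young_bound {d : ℕ} (a : (Fin d → ℤ) → ℝ≥0∞) (Λ : Finset (Fin d → ℤ)) :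
    ∑' i, (∑ k ∈ Λ, a (i + k)) ^ 2 ≤ Λ.card * (∑' m, a m) ^ 2 := by
  set A := ∑' m, a m with hA
  have hAi : ∀ i, (∑ k ∈ Λ, a (i + k)) ≤ A := by
    intro i
    have := Finset.sum_image (f := a) (g := fun k => i + k) (s := Λ)
      (by intro x _ y _ h; simpa using h)
    rw [← this]
    exact ENNReal.sum_le_tsum _
  have hsum : ∑' i, (∑ k ∈ Λ, a (i + k)) ≤ Λ.card * A := by
    rw [Summable.tsum_finsetSum (fun k _ => ENNReal.summable)]
    have : ∀ k, ∑' i, a (i + k) = A := fun k => (Equiv.addRight k).tsum_eq a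
    simp only [this, Finset.sum_const, nsmul_eq_mul]
    exact le_rfl
  calc ∑' i, (∑ k ∈ Λ, a (i + k)) ^ 2
      ≤ ∑' i, A * (∑ k ∈ Λ, a (i + k)) := by
        refine ENNReal.tsum_le_tsum fun i => ?_
        rw [pow_two]
        exact mul_le_mul_left (hAi i) _
    _ = A * ∑' i, (∑ k ∈ Λ, a (i + k)) := by rw [ENNReal.tsum_mul_left]
    _ ≤ A * (Λ.card * A) := mul_le_mul_right hsum _
    _ = Λ.card * A ^ 2 := by ring

lemma quad_sup (C u ρ : ℝ) (hC : 0 < C) (hu : 0 < u) (hρ : 0 < ρ) :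
    (⨆ β : {β : ℝ // 0 ≤ β}, ((β : ℝ) * u - C / 2 * (β : ℝ) ^ 2 * ρ)) = u ^ 2 / (2 * C * ρ) := by
  have hub : ∀ β : {β : ℝ // 0 ≤ β}, (β : ℝ) * u - C / 2 * (β : ℝ) ^ 2 * ρ ≤ u ^ 2 / (2 * C * ρ) := by
    intro β
    rw [le_div_iff₀ (by positivity)]
    nlinarith [sq_nonneg (C * ρ * (β : ℝ) - u)]
  have hne : Nonempty {β : ℝ // 0 ≤ β} := ⟨⟨0, le_rfl⟩⟩
  refine le_antisymm (ciSup_le hub) ?_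
  have hbdd : BddAbove (Set.range fun β : {β : ℝ // 0 ≤ β} =>
      (β : ℝ) * u - C / 2 * (β : ℝ) ^ 2 * ρ) := ⟨_, Set.forall_mem_range.mpr hub⟩
  have hle := le_ciSup hbdd (⟨u / (C * ρ), by positivity⟩ : {β : ℝ // 0 ≤ β})
  refine le_trans (le_of_eq ?_) hle
  field_simp
  ring

end GCBProof
end Aux

theorem entropy_density_lower_bound_from_gcb {S : Type*} {d : ℕ} [MeasurableSpace S]
    (μ μ' : Measure (Config S d)) [IsProbabilityMeasure μ] [IsProbabilityMeasure μ']
    (C : ℝ) (hC : 0 < C) (hGCB : GCB C μ) (hμ : TransInv μ) (hμ' : TransInv μ')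
    (f : Config S d → ℝ) (hm : Measurable f) (hb : IsBoundedFn f)
    (r : ℕ) (hdep : ∀ σ η : Config S d, (∀ i ∈ cube d r, σ i = η i) → f σ = f η)
    (u ρ : ℝ) (hu : 0 < u) (hfu : u < (∫ x, f x ∂μ') - ∫ x, f x ∂μ)
    (hfin : (∑' i, osc f i) ≠ ⊤)
    (hρ : ((∑' i, osc f i).toReal) ^ 2 = ρ) (hρpos : 0 < ρ) :
    (∀ n : ℕ, ENNReal.ofReal (u ^ 2 / (2 * C * ρ)) ≤
        relEntΛ (cube d (n + r)) μ' μ / (cube d n).card) ∧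
    (⨆ β : {β : ℝ // 0 ≤ β}, ((β : ℝ) * u - C / 2 * (β : ℝ) ^ 2 * ρ)) = u ^ 2 / (2 * C * ρ) ∧
    0 < u ^ 2 / (2 * C * ρ) := by
  classical
  have hρnn : (0:ℝ) ≤ ρ := hρpos.le
  refine ⟨?_, GCBProof.quad_sup C u ρ hC hu hρpos, by positivity⟩
  -- nonemptiness of the configuration space
  have hne : Nonempty (Config S d) := by
    by_contra h
    rw [not_nonempty_iff] at h
    have h1 := measure_univ (μ := μ)
    rw [Set.univ_eq_empty_iff.mpr h, measure_empty] at h1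
    exact one_ne_zero h1.symm
  obtain ⟨ξ⟩ := hne
  obtain ⟨M, hM⟩ := hb
  have hM0 : 0 ≤ M := le_trans (abs_nonneg _) (hM ξ)
  intro n
  set Λ : Finset (Fin d → ℤ) := cube d (n + r) with hΛ
  set ν' : Measure (Λ → S) := μ'.map (proj Λ) with hν'
  set ν : Measure (Λ → S) := μ.map (proj Λ) with hν
  haveI : IsProbabilityMeasure ν' := Measure.isProbabilityMeasure_map (GCBProof.measurable_proj' Λ).aemeasurable
  haveI : IsProbabilityMeasure ν := Measure.isProbabilityMeasure_map (GCBProof.measurable_proj' Λ).aemeasurable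
  rw [relEntΛ, relEnt]
  by_cases hcond : (μ'.map (proj Λ)) ≪ (μ.map (proj Λ)) ∧
      Integrable (llr (μ'.map (proj Λ)) (μ.map (proj Λ))) (μ'.map (proj Λ))
  swap
  · rw [if_neg hcond]
    have hcard : ((cube d n).card : ℝ≥0∞) ≠ 0 := by
      simp only [ne_eq, Nat.cast_eq_zero, Finset.card_eq_zero]
      intro hempty
      exact absurd (hempty ▸ GCBProof.zero_mem_cube n : (0 : Fin d → ℤ) ∈ (∅ : Finset (Fin d → ℤ))) (by simp)
    rw [ENNReal.top_div_of_ne_top (by simp)]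
    exact le_top
  rw [if_pos hcond]
  obtain ⟨hac, hint⟩ := hcond
  -- setup
  set N : ℕ := (cube d n).card with hN
  have hNpos : 0 < N := Finset.card_pos.mpr ⟨0, GCBProof.zero_mem_cube n⟩
  set β : ℝ := u / (C * ρ) with hβdef
  have hβ : 0 ≤ β := by positivity
  set F : Config S d → ℝ := fun σ => β * ∑ k ∈ cube d n, f (shift k σ) with hF
  -- locality of F on Λ
  have hFloc : ∀ σ η : Config S d, (∀ i ∈ Λ, σ i = η i) → F σ = F η := by
    intro σ η hagree
    simp only [hF]
    congr 1
    refine Finset.sum_congr rfl fun k hk => ?_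
    refine hdep _ _ fun m hm => ?_
    simp only [shift]
    refine hagree _ ?_
    rw [hΛ, GCBProof.mem_cube]
    rw [GCBProof.mem_cube] at hm
    rw [GCBProof.mem_cube] at hk
    intro j
    have h1 := hm j
    have h2 := hk j
    have : ((n + r : ℕ) : ℤ) = (n : ℤ) + (r : ℤ) := by push_cast; ring
    simp only [Pi.sub_apply, this]
    omega
  -- measurability and bounds for F
  have hFmeas : Measurable F :=
    measurable_const.mul (Finset.measurable_sum _ fun k _ => hm.comp (GCBProof.measurable_shift' k))
  have hFbdd : ∀ σ, |F σ| ≤ β * N * M := by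
    intro σ
    simp only [hF]
    rw [abs_mul, abs_of_nonneg hβ]
    have : |∑ k ∈ cube d n, f (shift k σ)| ≤ ∑ k ∈ cube d n, M :=
      le_trans (Finset.abs_sum_le_sum_abs _ _) (Finset.sum_le_sum fun k _ => hM _)
    rw [Finset.sum_const, nsmul_eq_mul] at this
    calc β * |∑ k ∈ cube d n, f (shift k σ)| ≤ β * (N * M) := by
          exact mul_le_mul_of_nonneg_left this hβ
      _ = β * N * M := by ring
  -- G on the projected space
  set G : (Λ → S) → ℝ := fun x => F (GCBProof.ext' Λ ξ x) with hG
  have hGmeas : Measurable G := hFmeas.comp (GCBProof.measurable_ext' Λ ξ)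
  have hGp : ∀ σ, G (proj Λ σ) = F σ := by
    intro σ
    refine hFloc _ _ fun i hi => ?_
    simp only [GCBProof.ext', proj, dif_pos hi]
  have hGbdd : ∀ x, |G x| ≤ β * N * M := fun x => hFbdd _
  -- integrability
  have hGint : Integrable G ν' :=
    ⟨hGmeas.aestronglyMeasurable, HasFiniteIntegral.of_bounded (C := β * N * M)
      (Filter.Eventually.of_forall fun x => by simpa using hGbdd x)⟩
  have hGexpint : Integrable (fun x => Real.exp (G x)) ν :=
    ⟨hGmeas.exp.aestronglyMeasurable,
      HasFiniteIntegral.of_bounded (C := Real.exp (β * N * M))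
      (Filter.Eventually.of_forall fun x => by
        rw [Real.norm_eq_abs, Real.abs_exp]
        exact Real.exp_le_exp.mpr (le_trans (le_abs_self _) (hGbdd x)))⟩
  -- integrals transfer
  have hmapint' : ∫ x, G x ∂ν' = ∫ σ, F σ ∂μ' := by
    rw [hν', integral_map (GCBProof.measurable_proj' Λ).aemeasurable hGmeas.aestronglyMeasurable]
    exact integral_congr_ae (Filter.Eventually.of_forall fun σ => by simpa using hGp σ)
  have hmapexp : ∫ x, Real.exp (G x) ∂ν = ∫ σ, Real.exp (F σ) ∂μ := by
    rw [hν, integral_map (GCBProof.measurable_proj' Λ).aemeasurable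
      hGmeas.exp.aestronglyMeasurable]
    exact integral_congr_ae (Filter.Eventually.of_forall fun σ => by simpa using congrArg Real.exp (hGp σ))
  -- integral of F under translation-invariant measures
  have hfintble : ∀ (κ : Measure (Config S d)) (_ : IsProbabilityMeasure κ) (k : Fin d → ℤ),
      Integrable (fun σ => f (shift k σ)) κ := by
    intro κ hκ k
    exact ⟨(hm.comp (GCBProof.measurable_shift' k)).aestronglyMeasurable,
      HasFiniteIntegral.of_bounded (C := M)
        (Filter.Eventually.of_forall fun σ => by simpa using hM _)⟩
  have hFint : ∀ (κ : Measure (Config S d)) (_ : IsProbabilityMeasure κ) (_ : TransInv κ),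
      ∫ σ, F σ ∂κ = β * N * ∫ σ, f σ ∂κ := by
    intro κ hκ hκt
    simp only [hF]
    rw [integral_const_mul, integral_finset_sum _ fun k _ => hfintble κ hκ k]
    have : ∀ k ∈ cube d n, ∫ σ, f (shift k σ) ∂κ = ∫ σ, f σ ∂κ := fun k _ =>
      GCBProof.integral_shift hκt f hm k
    rw [Finset.sum_congr rfl this, Finset.sum_const, nsmul_eq_mul]
    ring
  -- GCB bound on the oscillation sum of F
  set A : ℝ≥0∞ := ∑' i, osc f i with hA
  have hoscF : (∑' i, (osc F i) ^ 2) ≤ (ENNReal.ofReal β) ^ 2 * (N * A ^ 2) := by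
    calc (∑' i, (osc F i) ^ 2)
        ≤ ∑' i, ((ENNReal.ofReal β) ^ 2 * (∑ k ∈ cube d n, osc f (i + k)) ^ 2) := by
          refine ENNReal.tsum_le_tsum fun i => ?_
          rw [← mul_pow]
          exact pow_le_pow_left₀ zero_le (GCBProof.osc_smul_sum f (cube d n) β hβ i) 2
      _ = (ENNReal.ofReal β) ^ 2 * ∑' i, (∑ k ∈ cube d n, osc f (i + k)) ^ 2 := by
          rw [ENNReal.tsum_mul_left]
      _ ≤ (ENNReal.ofReal β) ^ 2 * (N * A ^ 2) :=
          mul_le_mul_right (GCBProof.young_bound (osc f) (cube d n)) _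
  have hT : (∑' i, (osc F i) ^ 2).toReal ≤ β ^ 2 * N * ρ := by
    have hRHSne : (ENNReal.ofReal β) ^ 2 * (N * A ^ 2) ≠ ⊤ := by
      refine ENNReal.mul_ne_top (by simp [ENNReal.pow_ne_top]) ?_
      exact ENNReal.mul_ne_top (by simp) (ENNReal.pow_ne_top hfin)
    have := ENNReal.toReal_mono hRHSne hoscF
    refine le_trans this (le_of_eq ?_)
    rw [ENNReal.toReal_mul, ENNReal.toReal_mul, ENNReal.toReal_pow, ENNReal.toReal_pow,
      ENNReal.toReal_ofReal hβ, ENNReal.toReal_natCast, ← hρ]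
    ring
  -- GCB applied to F
  have hgcb := hGCB F hFmeas ⟨β * N * M, hFbdd⟩ ⟨Λ, hFloc⟩
  set c : ℝ := ∫ σ, F σ ∂μ with hc
  have hFexpint : Integrable (fun σ => Real.exp (F σ - c)) μ :=
    ⟨(Real.measurable_exp.comp (hFmeas.sub measurable_const)).aestronglyMeasurable,
      HasFiniteIntegral.of_bounded (C := Real.exp (β * N * M + |c|))
      (Filter.Eventually.of_forall fun σ => by
        rw [Real.norm_eq_abs, Real.abs_exp]
        refine Real.exp_le_exp.mpr ?_
        have := hFbdd σ
        have h1 : |F σ - c| ≤ |F σ| + |c| := abs_sub _ _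
        have h2 := abs_le.mp this
        have h3 := le_abs_self (F σ - c)
        linarith [abs_nonneg c, le_trans h3 h1, (abs_le.mp (hFbdd σ)).2])⟩
  have hexpFpos : 0 < ∫ σ, Real.exp (F σ - c) ∂μ := integral_exp_pos hFexpint
  -- log bound
  have hlog : Real.log (∫ σ, Real.exp (F σ) ∂μ) ≤ c + C / 2 * (β ^ 2 * N * ρ) := by
    have hsplit : ∫ σ, Real.exp (F σ) ∂μ = Real.exp c * ∫ σ, Real.exp (F σ - c) ∂μ := by
      rw [← integral_const_mul]
      refine integral_congr_ae (Filter.Eventually.of_forall fun σ => ?_)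
      simp only [← Real.exp_add]
      ring_nf
    rw [hsplit, Real.log_mul (Real.exp_ne_zero c) hexpFpos.ne', Real.log_exp]
    have h1 : Real.log (∫ σ, Real.exp (F σ - c) ∂μ) ≤ C / 2 * (∑' i, (osc F i) ^ 2).toReal := by
      refine le_trans (Real.log_le_log hexpFpos hgcb) ?_
      rw [Real.log_exp]
    have h2 : C / 2 * (∑' i, (osc F i) ^ 2).toReal ≤ C / 2 * (β ^ 2 * N * ρ) :=
      mul_le_mul_of_nonneg_left hT (by positivity)
    linarith
  -- DV
  have hdv := GCBProof.dv_bound ν' ν hac hint G hGint hGexpint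
  rw [hmapint', hmapexp] at hdv
  have hμ'F := hFint μ' inferInstance hμ'
  have hμF := hFint μ inferInstance hμ
  -- final real inequality
  set I : ℝ := ∫ x, llr (μ'.map (proj Λ)) (μ.map (proj Λ)) x ∂(μ'.map (proj Λ)) with hI
  have hIbig : (N : ℝ) * (u ^ 2 / (2 * C * ρ)) ≤ I := by
    have hIneq : β * N * (∫ σ, f σ ∂μ') - (c + C / 2 * (β ^ 2 * N * ρ)) ≤ I := by
      have : ∫ σ, F σ ∂μ' - Real.log (∫ σ, Real.exp (F σ) ∂μ) ≤ I := hdv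
      rw [hμ'F] at this
      linarith
    rw [hc, hμF] at hIneq
    have hgap : u ≤ (∫ x, f x ∂μ') - ∫ x, f x ∂μ := hfu.le
    have hNnn : (0:ℝ) ≤ (N:ℝ) := Nat.cast_nonneg N
    have hβval : β * u - C / 2 * β ^ 2 * ρ = u ^ 2 / (2 * C * ρ) := by
      rw [hβdef]
      field_simp
      ring
    have : (N : ℝ) * (β * u - C / 2 * β ^ 2 * ρ) ≤
        β * N * (∫ σ, f σ ∂μ') - (β * N * (∫ σ, f σ ∂μ) + C / 2 * (β ^ 2 * N * ρ)) := by
      have hβu : (N:ℝ) * (β * u) ≤ (N:ℝ) * (β * ((∫ x, f x ∂μ') - ∫ x, f x ∂μ)) := by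
        refine mul_le_mul_of_nonneg_left (mul_le_mul_of_nonneg_left hgap hβ) hNnn
      nlinarith
    rw [hβval] at this
    linarith [this, hIneq]
  --转 to ENNReal
  rw [ENNReal.le_div_iff_mul_le (Or.inl (by
      simp only [ne_eq, Nat.cast_eq_zero]
      omega)) (Or.inl (by simp))]
  rw [← ENNReal.ofReal_natCast, ← ENNReal.ofReal_mul (by positivity)]
  refine ENNReal.ofReal_le_ofReal ?_
  calc u ^ 2 / (2 * C * ρ) * N = (N : ℝ) * (u ^ 2 / (2 * C * ρ)) := by ring
    _ ≤ I := hIbig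
end
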